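/- For the Replace Random task on lists of length n, where the output equals the input except that one uniformly random position is replaced by a fixed new symbol, the conditional total correlation is C(Y|X) = (n-1)[log₂(n) - log₂(n-1)]. -/

import Mathlib

open Finset Filter

/-- Shannon entropy (base 2) of a distribution on a finite type. -/
noncomputable def H2 {β : Type*} [Fintype β] (p : β → ℝ) : ℝ :=
  -∑ b, p b * Real.logb 2 (p b)

/-- KL divergence (base 2) between two distributions on a finite type. -/
noncomputable def KL2 {β : Type*} [Fintype β] (p q : β → ℝ) : ℝ :=
  ∑ b, p b * Real.logb 2 (p b / q b)

/-- `p` is a probability mass function on a finite type. -/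
def IsPMF {β : Type*} [Fintype β] (p : β → ℝ) : Prop :=
  (∀ b, 0 ≤ p b) ∧ ∑ b, p b = 1

/-- Entropy of the random variable `f` on the finite probability space `(Ω, p)`. -/
noncomputable def entOf {Ω γ : Type*} [Fintype Ω] [Fintype γ] [DecidableEq γ]
    (p : Ω → ℝ) (f : Ω → γ) : ℝ :=
  H2 (fun g => ∑ ω, if f ω = g then p ω else 0)

/-- Conditional total correlation `C((f i)_i | g)` of the family of random variables `f`
given the random variable `g`, on the finite probability space `(Ω, p)`:
`∑ i H(f i | g) - H((f i)_i | g)`, each conditional entropy written as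
`H(·, g) - H(g)`. -/
noncomputable def Cof {Ω ι β γ : Type*}
    [Fintype Ω] [Fintype ι] [DecidableEq ι] [Fintype β] [DecidableEq β]
    [Fintype γ] [DecidableEq γ]
    (p : Ω → ℝ) (f : ι → Ω → β) (g : Ω → γ) : ℝ :=
  (∑ i, (entOf p (fun ω => (f i ω, g ω)) - entOf p g))
    - (entOf p (fun ω => ((fun i => f i ω), g ω)) - entOf p g)

lemma entOf_const_aux {Ω γ : Type*} [Fintype Ω] [Fintype γ] [DecidableEq γ]
    (p : Ω → ℝ) (hp : ∑ ω, p ω = 1) (c0 : γ) : entOf p (fun _ => c0) = 0 := by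
  unfold entOf H2
  rw [neg_eq_zero]
  apply Finset.sum_eq_zero
  intro b _
  rcases eq_or_ne c0 b with h | h
  · simp [h, hp]
  · simp [h]

lemma entOf_inj_aux {n : ℕ} (hn : 0 < n) {γ : Type*} [Fintype γ] [DecidableEq γ]
    (f : Fin n → γ) (hf : Function.Injective f) :
    entOf (fun _ : Fin n => (n : ℝ)⁻¹) f = Real.logb 2 n := by
  have hn0 : ((n:ℝ)) ≠ 0 := by positivity
  unfold entOf H2
  have hq : ∀ b, (∑ ω, if f ω = b then (n:ℝ)⁻¹ else 0)
      = if b ∈ Finset.image f univ then (n:ℝ)⁻¹ else 0 := by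
    intro b
    by_cases h : b ∈ Finset.image f univ
    · obtain ⟨ω₀, -, rfl⟩ := Finset.mem_image.mp h
      rw [if_pos h]
      have : ∀ ω : Fin n, (if f ω = f ω₀ then (n:ℝ)⁻¹ else 0) = if ω = ω₀ then (n:ℝ)⁻¹ else 0 := by
        intro ω; congr 1; simp [hf.eq_iff]
      simp [this]
    · rw [if_neg h]
      apply Finset.sum_eq_zero
      intro ω _
      rw [if_neg]
      intro he
      exact h (Finset.mem_image.mpr ⟨ω, mem_univ ω, he⟩)
  simp only [hq]
  have : ∀ b : γ, (if b ∈ Finset.image f univ then (n:ℝ)⁻¹ else 0) *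
      Real.logb 2 (if b ∈ Finset.image f univ then (n:ℝ)⁻¹ else 0)
      = if b ∈ Finset.image f univ then (n:ℝ)⁻¹ * Real.logb 2 (n:ℝ)⁻¹ else 0 := by
    intro b; split_ifs <;> simp
  simp only [this]
  rw [Finset.sum_ite_mem, Finset.univ_inter, Finset.sum_const,
    Finset.card_image_of_injective _ hf, Finset.card_fin]
  rw [Real.logb_inv]
  field_simp
  rw [smul_neg, neg_neg, nsmul_eq_mul]
  field_simp

lemma entOf_coord_aux {β : Type*} [Fintype β] [DecidableEq β] {n : ℕ} (hn : 0 < n)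
    (x : Fin n → β) (F : β) (i : Fin n) (hFi : x i ≠ F) :
    entOf (fun _ : Fin n => (n : ℝ)⁻¹) (fun ω => ((if i = ω then F else x i), (() : Unit)))
      = -(((n : ℝ) - 1) * (n : ℝ)⁻¹ * Real.logb 2 (((n : ℝ) - 1) * (n : ℝ)⁻¹)
          + (n : ℝ)⁻¹ * Real.logb 2 (n : ℝ)⁻¹) := by
  have hn0 : ((n:ℝ)) ≠ 0 := by positivity
  unfold entOf H2
  set s : Finset (β × Unit) := {((x i, ()) : β × Unit), (F, ())} with hs
  have hne : ((x i, ()) : β × Unit) ≠ (F, ()) := by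
    intro h; exact hFi (congrArg Prod.fst h)
  have hqF : (∑ ω, if ((if i = ω then F else x i), (() : Unit)) = (F, ()) then (n:ℝ)⁻¹ else 0)
      = (n:ℝ)⁻¹ := by
    have h1 : ∀ ω : Fin n, (if ((if i = ω then F else x i), (() : Unit)) = (F, ()) then (n:ℝ)⁻¹ else 0)
        = if i = ω then (n:ℝ)⁻¹ else 0 := by
      intro ω; by_cases h : i = ω
      · simp [h]
      · simp [h, hFi]
    rw [Finset.sum_congr rfl (fun ω _ => h1 ω), Finset.sum_ite_eq]
    simp
  have hqX : (∑ ω, if ((if i = ω then F else x i), (() : Unit)) = (x i, ()) then (n:ℝ)⁻¹ else 0)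
      = ((n:ℝ) - 1) * (n:ℝ)⁻¹ := by
    have h1 : ∀ ω : Fin n, (if ((if i = ω then F else x i), (() : Unit)) = (x i, ()) then (n:ℝ)⁻¹ else 0)
        = (n:ℝ)⁻¹ - (if i = ω then (n:ℝ)⁻¹ else 0) := by
      intro ω; by_cases h : i = ω
      · subst h; simp [Ne.symm hFi]
      · simp [h]
    rw [Finset.sum_congr rfl (fun ω _ => h1 ω), Finset.sum_sub_distrib]
    simp [Finset.sum_const, Fintype.card_fin]
    field_simp
  have hrestrict : (∑ b : β × Unit, (∑ ω, if ((if i = ω then F else x i), (() : Unit)) = b then (n:ℝ)⁻¹ else 0)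
        * Real.logb 2 (∑ ω, if ((if i = ω then F else x i), (() : Unit)) = b then (n:ℝ)⁻¹ else 0))
      = ∑ b ∈ s, (∑ ω, if ((if i = ω then F else x i), (() : Unit)) = b then (n:ℝ)⁻¹ else 0)
        * Real.logb 2 (∑ ω, if ((if i = ω then F else x i), (() : Unit)) = b then (n:ℝ)⁻¹ else 0) := by
    refine (Finset.sum_subset (Finset.subset_univ s) ?_).symm
    intro b _ hb
    have hz : (∑ ω, if ((if i = ω then F else x i), (() : Unit)) = b then (n:ℝ)⁻¹ else 0) = 0 := by
      apply Finset.sum_eq_zero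
      intro ω _
      rw [if_neg]
      intro he
      apply hb
      rw [hs, Finset.mem_insert, Finset.mem_singleton]
      by_cases h : i = ω
      · right; rw [← he]; simp [h]
      · left; rw [← he]; simp [h]
    rw [hz]; simp
  rw [hrestrict, hs, Finset.sum_pair hne, hqF, hqX]

theorem stmt_5 {β : Type*} [Fintype β] [DecidableEq β] (n : ℕ) (hn : 0 < n)
    (x : Fin n → β) (hx : Function.Injective x) (F : β) (hF : ∀ i, x i ≠ F) :
    Cof (fun _ : Fin n => (n : ℝ)⁻¹)
        (fun i k => if i = k then F else x i)
        (fun _ => (() : Unit))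
      = ((n : ℝ) - 1) * (Real.logb 2 n - Real.logb 2 ((n : ℝ) - 1)) := by
  have hn0 : ((n:ℝ)) ≠ 0 := by positivity
  have hp : ∑ ω : Fin n, (n:ℝ)⁻¹ = 1 := by
    simp [Finset.sum_const, Fintype.card_fin]
    field_simp
  have hg : entOf (fun _ : Fin n => (n:ℝ)⁻¹) (fun _ => (() : Unit)) = 0 :=
    entOf_const_aux _ hp ()
  have hinj : Function.Injective
      (fun ω : Fin n => ((fun i => if i = ω then F else x i), (() : Unit))) := by
    intro a b h
    have h' : (fun i => if i = a then F else x i) = (fun i => if i = b then F else x i) :=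
      congrArg Prod.fst h
    by_contra hab
    have := congrFun h' a
    simp [hab] at this
    exact hF a this.symm
  have hjoint : entOf (fun _ : Fin n => (n:ℝ)⁻¹)
      (fun ω : Fin n => ((fun i => if i = ω then F else x i), (() : Unit)))
      = Real.logb 2 n := entOf_inj_aux hn _ hinj
  unfold Cof
  simp only []
  rw [hjoint, hg]
  have hcoord : ∀ i : Fin n,
      entOf (fun _ : Fin n => (n:ℝ)⁻¹) (fun ω => ((if i = ω then F else x i), (() : Unit)))
      = -(((n : ℝ) - 1) * (n : ℝ)⁻¹ * Real.logb 2 (((n : ℝ) - 1) * (n : ℝ)⁻¹)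
          + (n : ℝ)⁻¹ * Real.logb 2 (n : ℝ)⁻¹) := fun i => entOf_coord_aux hn x F i (hF i)
  simp only [hcoord, sub_zero, Finset.sum_const, Finset.card_univ, Fintype.card_fin,
    nsmul_eq_mul]
  rw [Real.logb_inv]
  rcases Nat.lt_or_ge n 2 with h2 | h2
  · interval_cases n
    norm_num
  · have hn1 : ((n:ℝ) - 1) ≠ 0 := by
      have : (2:ℝ) ≤ (n:ℝ) := by exact_mod_cast h2
      linarith
    rw [Real.logb_mul hn1 (inv_ne_zero hn0), Real.logb_inv]
    field_simp
    ring
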